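/- For every natural number m, the sum over q from 0 to m of C(2q,q)·C(2m-2q,m-q)/(q+1) (as rational numbers) equals C(2m+1, m+1). -/

import Mathlib

lemma D_aux (m : ℕ) : ∀ k, k ≤ m →
    ∑ q ∈ Finset.range k,
      ((2 * q).choose q : ℚ) * ((2 * m - 2 * q).choose (m - q) : ℚ) / ((q : ℚ) + 1)
    = (((2 * m).choose m : ℚ) * (2 * (m : ℚ) + 1)
        - ((2 * k).choose k : ℚ) * ((2 * m - 2 * k).choose (m - k) : ℚ)
          * (2 * ((m - k : ℕ) : ℚ) + 1)) / ((m : ℚ) + 1) := by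
  intro k
  induction k with
  | zero =>
    intro _
    simp
  | succ k ih =>
    intro hk
    obtain ⟨j, rfl⟩ : ∃ j, m = k + 1 + j := ⟨m - (k + 1), by omega⟩
    rw [Finset.sum_range_succ, ih (by omega)]
    have e1 : 2 * (k + 1 + j) - 2 * k = 2 * (j + 1) := by omega
    have e2 : k + 1 + j - k = j + 1 := by omega
    have e3 : 2 * (k + 1 + j) - 2 * (k + 1) = 2 * j := by omega
    have e4 : k + 1 + j - (k + 1) = j := by omega
    rw [e1, e2, e3, e4]
    have hB : ((k : ℚ) + 1) * ((2 * (k + 1)).choose (k + 1) : ℚ)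
        = 2 * (2 * k + 1) * ((2 * k).choose k : ℚ) := by
      have := Nat.succ_mul_centralBinom_succ k
      simp only [Nat.centralBinom] at this
      exact_mod_cast this
    have hD : ((j : ℚ) + 1) * ((2 * (j + 1)).choose (j + 1) : ℚ)
        = 2 * (2 * j + 1) * ((2 * j).choose j : ℚ) := by
      have := Nat.succ_mul_centralBinom_succ j
      simp only [Nat.centralBinom] at this
      exact_mod_cast this
    have h1 : ((k : ℚ) + 1 + j + 1 : ℚ) ≠ 0 := by positivity
    have h2 : ((k : ℚ) + 1 : ℚ) ≠ 0 := by positivity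
    push_cast
    field_simp
    linear_combination ((2 * (j:ℚ) + 1) * ((2 * j).choose j : ℚ)) * hB
      - ((2 * (k:ℚ) + 1) * ((2 * k).choose k : ℚ)) * hD

theorem D_one_zero (m : ℕ) :
    ∑ q ∈ Finset.range (m + 1),
      ((2 * q).choose q : ℚ) * ((2 * m - 2 * q).choose (m - q) : ℚ) / ((q : ℚ) + 1)
    = ((2 * m + 1).choose (m + 1) : ℚ) := by
  rw [Finset.sum_range_succ, D_aux m m le_rfl]
  simp only [Nat.sub_self, Nat.choose_self, Nat.cast_one, Nat.cast_zero]
  have hc : ((2 * m : ℚ) + 1) * ((2 * m).choose m : ℚ)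
      = ((2 * m + 1).choose (m + 1) : ℚ) * ((m : ℚ) + 1) := by
    exact_mod_cast Nat.add_one_mul_choose_eq (2 * m) m
  have h1 : ((m : ℚ) + 1) ≠ 0 := by positivity
  field_simp
  linear_combination hc
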